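/- Let d be an even integer with d ≥ 4. The polynomial T(x) = (x^{d/2} + 1/100)^2 − (9/10)^2 x^3 has exactly two real roots, while T_0(x) = (x^{d/2} + 1/100)^2 − (1/100)^2 x^3 has no real roots; consequently Disc(T) and Disc(T_0) have opposite signs. -/

import Mathlib

open Polynomial

/-- The discriminant of a polynomial over an algebraically closed field. -/
noncomputable def polyDisc {K : Type*} [Field K] (f : K[X]) : K :=
  (-1) ^ (f.natDegree * (f.natDegree - 1) / 2) * f.leadingCoeff ^ (f.natDegree - 2) *
    (f.roots.map fun r => (derivative f).eval r).prod


noncomputable def Tp (m : ℕ) (k : ℝ) : ℝ[X] := ((X : ℝ[X]) ^ m + C (1/100)) ^ 2 - C k * X ^ 3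

lemma monic_aux (m : ℕ) (hm : 2 ≤ m) : (((X : ℝ[X]) ^ m + C (1/100)) ^ 2).Monic := by
  exact ((monic_X_pow_add_C _ (by omega)).pow 2)

lemma natDegree_aux (m : ℕ) (hm : 2 ≤ m) :
    (((X : ℝ[X]) ^ m + C (1/100)) ^ 2).natDegree = 2 * m := by
  rw [natDegree_pow, natDegree_X_pow_add_C]

lemma degree_lt_aux (m : ℕ) (hm : 2 ≤ m) (k : ℝ) :
    (C k * (X : ℝ[X]) ^ 3).degree < (((X : ℝ[X]) ^ m + C (1/100)) ^ 2).degree := by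
  have h1 : (C k * (X : ℝ[X]) ^ 3).degree ≤ 3 := by
    calc (C k * (X : ℝ[X]) ^ 3).degree ≤ (C k).degree + ((X : ℝ[X]) ^ 3).degree := degree_mul_le _ _
    _ ≤ 0 + 3 := by gcongr <;> first | exact degree_C_le | exact le_of_eq (degree_X_pow 3)
    _ = 3 := by simp
  have h2 : (((X : ℝ[X]) ^ m + C (1/100)) ^ 2).degree = ((2 * m : ℕ) : WithBot ℕ) := by
    rw [degree_eq_natDegree (monic_aux m hm).ne_zero, natDegree_aux m hm]
  rw [h2]
  refine lt_of_le_of_lt h1 ?_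
  exact_mod_cast Nat.cast_lt.mpr (by omega : 3 < 2 * m)

lemma monic_Tp (m : ℕ) (hm : 2 ≤ m) (k : ℝ) : (Tp m k).Monic := by
  unfold Tp Monic
  rw [leadingCoeff_sub_of_degree_lt (degree_lt_aux m hm k)]
  exact monic_aux m hm

lemma natDegree_Tp (m : ℕ) (hm : 2 ≤ m) (k : ℝ) : (Tp m k).natDegree = 2 * m := by
  unfold Tp
  rw [natDegree_sub_eq_left_of_natDegree_lt, natDegree_aux m hm]
  rw [natDegree_aux m hm]
  calc (C k * (X : ℝ[X]) ^ 3).natDegree ≤ 3 := natDegree_mul_le.trans (by simp)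
  _ < 2 * m := by omega

lemma eval_Tp (m : ℕ) (k x : ℝ) : (Tp m k).eval x = (x ^ m + 1/100) ^ 2 - k * x ^ 3 := by
  simp [Tp]

lemma deriv_Tp (m : ℕ) (hm : 2 ≤ m) (k : ℝ) :
    derivative (Tp m k) = C 2 * ((X : ℝ[X]) ^ m + C (1/100)) * (C (m : ℝ) * X ^ (m - 1))
      - C (3 * k) * X ^ 2 := by
  unfold Tp
  rw [derivative_sub, derivative_pow, derivative_add, derivative_X_pow, derivative_C,
    derivative_mul, derivative_C, derivative_X_pow]
  push_cast
  ring_nf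
  simp
  ring


lemma nat_ineq : ∀ j : ℕ, 10^6 * (2*j+1)^3 * 4^(j+2) < 27 * 2025^(j+2) := by
  intro j
  induction j with
  | zero => norm_num
  | succ n ih =>
    have h1 : (2*(n+1)+1)^3 ≤ 27 * (2*n+1)^3 := by nlinarith [sq_nonneg n, n.zero_le]
    calc 10^6 * (2*(n+1)+1)^3 * 4^(n+1+2) = (10^6 * (2*(n+1)+1)^3 * 4^(n+2)) * 4 := by ring
    _ ≤ (10^6 * (27 * (2*n+1)^3) * 4^(n+2)) * 4 := by
        have := Nat.mul_le_mul_right (4^(n+2)) (Nat.mul_le_mul_left (10^6) h1)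
        omega
    _ = (10^6 * (2*n+1)^3 * 4^(n+2)) * 108 := by ring
    _ < (27 * 2025^(n+2)) * 108 := by
        exact (Nat.mul_lt_mul_right (by norm_num)).mpr ih
    _ ≤ 27 * 2025^(n+1+2) := by
        have : (2025:ℕ)^(n+1+2) = 2025^(n+2) * 2025 := by ring
        rw [this]; nlinarith [Nat.one_le_two_pow (n := n), pow_pos (by norm_num : 0 < (2025:ℕ)) (n+2)]

lemma key_ineq_T (m : ℕ) (hm : 2 ≤ m) :
    ((2*(m:ℝ)*(1/100)/(2*(m:ℝ)-3))^2/((9/10:ℝ)^2))^m < (3*(1/100)/(2*(m:ℝ)-3))^3 := by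
  have hs : (1:ℝ) ≤ 2*(m:ℝ)-3 := by
    have : (2:ℝ) ≤ (m:ℝ) := by exact_mod_cast hm
    linarith
  have hspos : (0:ℝ) < 2*(m:ℝ)-3 := by linarith
  -- base bound
  have hbase : (2*(m:ℝ)*(1/100)/(2*(m:ℝ)-3))^2/((9/10:ℝ)^2) ≤ 4/2025 := by
    have h2m : 2*(m:ℝ) ≤ 4*(2*(m:ℝ)-3) := by
      have : (2:ℝ) ≤ (m:ℝ) := by exact_mod_cast hm
      linarith
    rw [div_le_iff₀ (by norm_num), div_pow, div_le_iff₀ (by positivity)]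
    nlinarith [sq_nonneg (2*(m:ℝ)-3), mul_pos hspos hspos]
  have hbase0 : (0:ℝ) ≤ (2*(m:ℝ)*(1/100)/(2*(m:ℝ)-3))^2/((9/10:ℝ)^2) := by positivity
  have h1 : ((2*(m:ℝ)*(1/100)/(2*(m:ℝ)-3))^2/((9/10:ℝ)^2))^m ≤ (4/2025:ℝ)^m :=
    pow_le_pow_left₀ hbase0 hbase m
  refine lt_of_le_of_lt h1 ?_
  -- (4/2025)^m < 27/(10^6 (2m-3)^3)
  have hnat := nat_ineq (m - 2)
  have hm2 : m - 2 + 2 = m := by omega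
  have hcast : (10:ℝ)^6 * (2*(m:ℝ)-3)^3 * 4^m < 27 * 2025^m := by
    have h2 : 2*(m-2)+1 = 2*m-3 := by omega
    rw [hm2, h2] at hnat
    have : ((10^6 * (2*m-3)^3 * 4^m : ℕ) : ℝ) < ((27 * 2025^m : ℕ) : ℝ) := by exact_mod_cast hnat
    push_cast at this
    have hc : ((2*m-3 : ℕ) : ℝ) = 2*(m:ℝ)-3 := by
      have : 3 ≤ 2*m := by omega
      push_cast [Nat.cast_sub this]
      ring
    rw [hc] at this
    convert this using 2 <;> norm_num
  have hrhs : (3*(1/100)/(2*(m:ℝ)-3))^3 = 27/(10^6 * (2*(m:ℝ)-3)^3) := by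
    rw [div_pow, div_eq_div_iff (by positivity) (by positivity)]
    ring
  rw [hrhs, div_pow, div_lt_div_iff₀ (by positivity) (by positivity)]
  calc (4:ℝ)^m * (10^6 * (2*(m:ℝ)-3)^3) = 10^6 * (2*(m:ℝ)-3)^3 * 4^m := by ring
  _ < 27 * 2025^m := hcast

lemma key_ineq_T0 (m : ℕ) (hm : 2 ≤ m) :
    (3*(1/100)/(2*(m:ℝ)-3))^3 < ((2*(m:ℝ)*(1/100)/(2*(m:ℝ)-3))^2/((1/100:ℝ)^2))^m := by
  have hs : (1:ℝ) ≤ 2*(m:ℝ)-3 := by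
    have : (2:ℝ) ≤ (m:ℝ) := by exact_mod_cast hm
    linarith
  have hspos : (0:ℝ) < 2*(m:ℝ)-3 := by linarith
  have hL : (3*(1/100)/(2*(m:ℝ)-3))^3 < 1 := by
    have : 3*(1/100)/(2*(m:ℝ)-3) ≤ 3*(1/100) := by
      rw [div_le_iff₀ hspos]; nlinarith
    have h0 : (0:ℝ) ≤ 3*(1/100)/(2*(m:ℝ)-3) := by positivity
    calc (3*(1/100)/(2*(m:ℝ)-3))^3 ≤ (3*(1/100))^3 := pow_le_pow_left₀ h0 this 3
    _ < 1 := by norm_num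
  have hR : (1:ℝ) ≤ ((2*(m:ℝ)*(1/100)/(2*(m:ℝ)-3))^2/((1/100:ℝ)^2))^m := by
    refine one_le_pow₀ ?_
    have hA : (1/100:ℝ) ≤ 2*(m:ℝ)*(1/100)/(2*(m:ℝ)-3) := by
      rw [le_div_iff₀ hspos]; nlinarith
    rw [le_div_iff₀ (by positivity), one_mul]
    exact pow_le_pow_left₀ (by norm_num) hA 2
  exact hL.trans_le hR



lemma no_common_root (m : ℕ) (hm : 2 ≤ m) (k : ℝ) (hk : 0 < k)
    (hne : (3*(1/100)/(2*(m:ℝ)-3))^3 ≠ ((2*(m:ℝ)*(1/100)/(2*(m:ℝ)-3))^2/k)^m) :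
    ∀ z : ℂ, aeval z (Tp m k) = 0 → aeval z (derivative (Tp m k)) ≠ 0 := by
  intro z h1 h2
  have hm3 : (2*(m:ℂ) - 3) ≠ 0 := by
    have : ((2*(m:ℝ)-3 : ℝ) : ℂ) ≠ 0 := by
      have h : (2:ℝ) ≤ (m:ℝ) := by exact_mod_cast hm
      simp only [ne_eq, Complex.ofReal_eq_zero]
      intro h'; linarith [h']
    push_cast at this; convert this using 2 <;> push_cast <;> ring
  set c : ℂ := ((1/100:ℝ):ℂ) with hc
  have hc0 : c ≠ 0 := by rw [hc]; norm_num
  have e1 : (z^m + c)^2 = (k:ℂ) * z^3 := by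
    simp only [Tp, map_sub, map_pow, map_add, map_mul, aeval_X, aeval_C] at h1
    rw [sub_eq_zero] at h1
    simpa [hc] using h1
  have e2 : 2*(z^m + c)*((m:ℂ)*z^(m-1)) = 3*(k:ℂ)*z^2 := by
    rw [deriv_Tp m hm k] at h2
    simp only [map_sub, map_mul, map_pow, map_add, aeval_X, aeval_C, map_ofNat] at h2
    rw [sub_eq_zero] at h2
    push_cast at h2
    simpa [hc] using h2
  have hz : z ≠ 0 := by
    rintro rfl
    rw [zero_pow (by omega), zero_add, zero_pow (by norm_num), mul_zero] at e1
    exact hc0 (pow_eq_zero_iff (by norm_num) |>.mp e1)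
  have hw : z^m + c ≠ 0 := by
    intro h
    rw [h] at e1
    have : (k:ℂ) * z^3 ≠ 0 := by
      apply mul_ne_zero
      · simpa using hk.ne'
      · exact pow_ne_zero _ hz
    exact this (by rw [← e1]; norm_num)
  -- multiply e2 by z
  have e2' : 2*(m:ℂ)*z^m*(z^m + c) = 3*(k:ℂ)*z^3 := by
    have hmm : m - 1 + 1 = m := by omega
    have := congrArg (· * z) e2
    have hzm : z^m = z^(m-1)*z := by rw [← pow_succ, hmm]
    calc 2*(m:ℂ)*z^m*(z^m + c) = 2*(z^m + c)*((m:ℂ)*z^(m-1)) * z := by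
          rw [hzm]; ring
    _ = 3*(k:ℂ)*z^2 * z := this
    _ = 3*(k:ℂ)*z^3 := by ring
  have e3 : 2*(m:ℂ)*z^m*(z^m + c) = 3*(z^m + c)^2 := by
    rw [e2', e1]; ring
  have hu : z^m = 3*c/(2*(m:ℂ)-3) := by
    have := mul_right_cancel₀ hw (by linear_combination e3 :
      (2*(m:ℂ)*z^m - 3*(z^m+c)) * (z^m + c) = 0 * (z^m + c))
    rw [sub_eq_zero] at this
    field_simp
    linear_combination this
  have hwc : z^m + c = 2*(m:ℂ)*c/(2*(m:ℂ)-3) := by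
    rw [hu]; field_simp; ring
  have hz3 : z^3 = (2*(m:ℂ)*c/(2*(m:ℂ)-3))^2 / (k:ℂ) := by
    have hk0 : (k:ℂ) ≠ 0 := by simpa using hk.ne'
    rw [eq_div_iff hk0, ← hwc]; linear_combination -e1
  have key : (3*c/(2*(m:ℂ)-3))^3 = ((2*(m:ℂ)*c/(2*(m:ℂ)-3))^2 / (k:ℂ))^m := by
    calc (3*c/(2*(m:ℂ)-3))^3 = (z^m)^3 := by rw [hu]
    _ = z^(m*3) := by rw [← pow_mul]
    _ = (z^3)^m := by rw [← pow_mul, Nat.mul_comm]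
    _ = ((2*(m:ℂ)*c/(2*(m:ℂ)-3))^2 / (k:ℂ))^m := by rw [hz3]
  apply hne
  have : (((3*(1/100)/(2*(m:ℝ)-3))^3 : ℝ) : ℂ) = ((((2*(m:ℝ)*(1/100)/(2*(m:ℝ)-3))^2/k)^m : ℝ) : ℂ) := by
    push_cast
    convert key using 2 <;> rw [hc] <;> push_cast <;> ring
  exact_mod_cast this



lemma T0_pos (m : ℕ) (hm : 2 ≤ m) (x : ℝ) : 0 < (Tp m ((1/100)^2)).eval x := by
  rw [eval_Tp]
  rcases lt_trichotomy x 0 with hx | rfl | hx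
  · have hx3 : x^3 < 0 := by
      have := Odd.pow_neg (by decide : Odd 3) hx
      simpa using this
    nlinarith [sq_nonneg (x^m + 1/100)]
  · rw [zero_pow (by omega)]
    norm_num
  · rcases le_or_gt x 1 with h1 | h1
    · have hxm : 0 < x^m := pow_pos hx m
      have hx3 : x^3 ≤ 1 := pow_le_one₀ hx.le h1
      nlinarith
    · have h2 : x^3 ≤ (x^m)^2 := by
        calc x^3 ≤ x^4 := pow_le_pow_right₀ h1.le (by norm_num)
        _ ≤ x^(2*m) := pow_le_pow_right₀ h1.le (by omega)
        _ = (x^m)^2 := by rw [← pow_mul, Nat.mul_comm]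
      have hx3 : 0 < x^3 := pow_pos (lt_trans one_pos h1) 3
      nlinarith [pow_pos (lt_trans one_pos h1) m]

lemma real_roots (m : ℕ) (hm : 2 ≤ m) :
    ∃ x₁ x₂ : ℝ, x₁ ≠ x₂ ∧ {x : ℝ | (Tp m ((9/10)^2)).eval x = 0} = {x₁, x₂} := by
  set n := 2*m with hn
  have hn4 : 4 ≤ n := by omega
  set φ : ℝ → ℝ := fun t => t^n - (9/10)*t^3 + 1/100 with hφ
  have hcont : Continuous φ := by
    apply Continuous.add
    apply Continuous.sub (continuous_pow n)
    exact continuous_const.mul (continuous_pow 3)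
    exact continuous_const
  have hderiv : ∀ t : ℝ, HasDerivAt φ ((n:ℝ)*t^(n-1) - (9/10)*(3*t^2)) t := by
    intro t
    have h := ((hasDerivAt_pow n t).sub ((hasDerivAt_pow 3 t).const_mul (9/10))).add_const (1/100)
    exact h
  -- find t₀
  have hg : Continuous (fun t : ℝ => (n:ℝ)*t^(n-3)) := continuous_const.mul (continuous_pow (n-3))
  have hg0 : (n:ℝ)*(0:ℝ)^(n-3) < 27/10 := by
    rw [zero_pow (by omega)]; norm_num
  have hg2 : (27/10:ℝ) < (n:ℝ)*(2:ℝ)^(n-3) := by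
    have h1 : (2:ℝ) ≤ (2:ℝ)^(n-3) := by
      calc (2:ℝ) = 2^1 := (pow_one 2).symm
      _ ≤ 2^(n-3) := pow_le_pow_right₀ one_le_two (by omega)
    have h2 : (4:ℝ) ≤ (n:ℝ) := by exact_mod_cast hn4
    nlinarith
  obtain ⟨t₀, ht₀mem, ht₀⟩ : ∃ t₀ ∈ Set.Ioo (0:ℝ) 2, (n:ℝ)*t₀^(n-3) = 27/10 := by
    have := intermediate_value_Ioo (by norm_num : (0:ℝ) ≤ 2) hg.continuousOn
      (Set.mem_Ioo.mpr ⟨hg0, hg2⟩)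
    obtain ⟨t₀, h1, h2⟩ := this
    exact ⟨t₀, h1, h2⟩
  have ht₀pos : 0 < t₀ := ht₀mem.1
  -- monotonicity
  have key : ∀ t : ℝ, 0 < t → deriv φ t = t^2 * ((n:ℝ)*t^(n-3) - 27/10) := by
    intro t ht
    rw [(hderiv t).deriv]
    have h1 : t^(n-1) = t^(n-3)*t^2 := by rw [← pow_add]; congr 1; omega
    rw [h1]; ring
  have hanti : StrictAntiOn φ (Set.Icc 0 t₀) := by
    apply strictAntiOn_of_deriv_neg (convex_Icc 0 t₀) hcont.continuousOn
    intro t ht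
    rw [interior_Icc] at ht
    rw [key t ht.1]
    have h1 : (n:ℝ)*t^(n-3) < 27/10 := by
      rw [← ht₀]
      have : t^(n-3) < t₀^(n-3) := pow_lt_pow_left₀ ht.2 ht.1.le (by omega)
      have hnp : (0:ℝ) < n := by exact_mod_cast (by omega : 0 < n)
      nlinarith
    nlinarith [pow_pos ht.1 2]
  have hmono : StrictMonoOn φ (Set.Ici t₀) := by
    apply strictMonoOn_of_deriv_pos (convex_Ici t₀) hcont.continuousOn
    intro t ht
    rw [interior_Ici] at ht
    have htpos : 0 < t := ht₀pos.trans ht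
    rw [key t htpos]
    have h1 : 27/10 < (n:ℝ)*t^(n-3) := by
      rw [← ht₀]
      have : t₀^(n-3) < t^(n-3) := pow_lt_pow_left₀ ht ht₀pos.le (by omega)
      have hnp : (0:ℝ) < n := by exact_mod_cast (by omega : 0 < n)
      nlinarith
    nlinarith [pow_pos htpos 2]
  -- values
  have hφ0 : φ 0 = 1/100 := by
    simp only [hφ]
    rw [zero_pow (by omega)]
    norm_num
  have hφhalf : φ (1/2) < 0 := by
    have h1 : ((1:ℝ)/2)^n ≤ (1/2)^4 := pow_le_pow_of_le_one (by norm_num) (by norm_num) hn4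
    simp only [hφ]
    norm_num at h1 ⊢
    nlinarith
  have hφ2 : 0 < φ 2 := by
    have h1 : (16:ℝ) ≤ 2^n := by
      calc (16:ℝ) = 2^4 := by norm_num
      _ ≤ 2^n := pow_le_pow_right₀ one_le_two hn4
    simp only [hφ]
    nlinarith
  -- roots
  obtain ⟨r₁, hr₁mem, hr₁⟩ : ∃ r ∈ Set.Ioo (0:ℝ) (1/2), φ r = 0 := by
    have := intermediate_value_Ioo' (by norm_num : (0:ℝ) ≤ 1/2) hcont.continuousOn
      (Set.mem_Ioo.mpr ⟨hφhalf, by rw [hφ0]; norm_num⟩)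
    obtain ⟨r, h1, h2⟩ := this
    exact ⟨r, h1, h2⟩
  obtain ⟨r₂, hr₂mem, hr₂⟩ : ∃ r ∈ Set.Ioo (1/2:ℝ) 2, φ r = 0 := by
    have := intermediate_value_Ioo (by norm_num : (1/2:ℝ) ≤ 2) hcont.continuousOn
      (Set.mem_Ioo.mpr ⟨hφhalf, hφ2⟩)
    obtain ⟨r, h1, h2⟩ := this
    exact ⟨r, h1, h2⟩
  have hφt₀ : φ t₀ < 0 := by
    rcases le_total t₀ (1/2) with h | h
    · exact lt_of_le_of_lt (hmono.monotoneOn (Set.self_mem_Ici) (Set.mem_Ici.mpr h) h) hφhalf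
    · exact lt_of_le_of_lt (hanti.antitoneOn (Set.mem_Icc.mpr ⟨by norm_num, h⟩)
        (Set.mem_Icc.mpr ⟨ht₀pos.le, le_refl _⟩) h) hφhalf
  have hr₁t₀ : r₁ < t₀ := by
    by_contra h
    push_neg at h
    have := hmono (Set.mem_Ici.mpr h) (Set.mem_Ici.mpr (h.trans hr₁mem.2.le)) hr₁mem.2
    rw [hr₁] at this
    linarith
  have hr₂t₀ : t₀ < r₂ := by
    by_contra h
    push_neg at h
    have := hanti (Set.mem_Icc.mpr ⟨by norm_num, hr₂mem.1.le.trans h⟩)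
      (Set.mem_Icc.mpr ⟨by linarith [hr₂mem.1], h⟩) hr₂mem.1
    rw [hr₂] at this
    linarith
  have huniq : ∀ t : ℝ, 0 ≤ t → φ t = 0 → t = r₁ ∨ t = r₂ := by
    intro t ht hφt
    rcases lt_trichotomy t t₀ with h | rfl | h
    · left
      exact hanti.injOn (Set.mem_Icc.mpr ⟨ht, h.le⟩)
        (Set.mem_Icc.mpr ⟨hr₁mem.1.le, hr₁t₀.le⟩) (by rw [hφt, hr₁])
    · exact absurd hφt hφt₀.ne
    · right
      exact hmono.injOn (Set.mem_Ici.mpr h.le) (Set.mem_Ici.mpr hr₂t₀.le)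
        (by rw [hφt, hr₂])
  -- conclude
  refine ⟨r₁^2, r₂^2, ?_, ?_⟩
  · have h12 : r₁ < r₂ := by linarith [hr₁mem.2, hr₂mem.1]
    exact (pow_lt_pow_left₀ h12 hr₁mem.1.le (two_ne_zero)).ne
  · ext x
    simp only [Set.mem_setOf_eq, Set.mem_insert_iff, Set.mem_singleton_iff]
    constructor
    · intro hx
      rw [eval_Tp] at hx
      have hxpos : 0 < x := by
        rcases lt_trichotomy x 0 with h | rfl | h
        · exfalso
          have hx3 : x^3 < 0 := by
            have := Odd.pow_neg (by decide : Odd 3) h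
            simpa using this
          nlinarith [sq_nonneg (x^m + 1/100)]
        · exfalso
          rw [zero_pow (by omega)] at hx
          norm_num at hx
        · exact h
      set t := Real.sqrt x with htdef
      have ht : t^2 = x := Real.sq_sqrt hxpos.le
      have htpos : 0 < t := Real.sqrt_pos.mpr hxpos
      have hx_m : x^m = t^n := by rw [← ht, ← pow_mul, hn, Nat.mul_comm]
      have hx3 : x^3 = t^6 := by rw [← ht]; ring
      have hzero : φ t * (t^n + (9/10)*t^3 + 1/100) = 0 := by
        have : φ t * (t^n + (9/10)*t^3 + 1/100) = (t^n + 1/100)^2 - (9/10)^2*t^6 := by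
          simp only [hφ]; ring
        rw [this, ← hx_m, ← hx3]
        linarith [hx]
      have hother : 0 < t^n + (9/10)*t^3 + 1/100 := by positivity
      have hφt : φ t = 0 := (mul_eq_zero.mp hzero).resolve_right hother.ne'
      rcases huniq t htpos.le hφt with rfl | rfl
      · left; rw [← ht]
      · right; rw [← ht]
    · intro hx
      have hroot : ∀ r : ℝ, φ r = 0 → (Tp m ((9/10)^2)).eval (r^2) = 0 := by
        intro r hr
        rw [eval_Tp]
        have h1 : (r^2)^m = r^n := by rw [← pow_mul, hn, Nat.mul_comm]
        have h2 : (r^2)^3 = r^6 := by ring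
        rw [h1, h2]
        have : (r^n + 1/100)^2 - (9/10)^2*r^6 = φ r * (r^n + (9/10)*r^3 + 1/100) := by
          simp only [hφ]; ring
        rw [this, hr, zero_mul]
      rcases hx with rfl | rfl
      · exact hroot r₁ hr₁
      · exact hroot r₂ hr₂


lemma conj_prod_aux (g : ℂ → ℂ) (hg : ∀ z : ℂ, g ((starRingEnd ℂ) z) = (starRingEnd ℂ) (g z)) :
    ∀ (N : ℕ) (M : Multiset ℂ), Multiset.card M ≤ N → M.map (starRingEnd ℂ) = M →
      (∀ z ∈ M, z.im ≠ 0) → (∀ z ∈ M, g z ≠ 0) →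
      ∃ v : ℝ, 0 < v ∧ (M.map g).prod = (v : ℂ) := by
  intro N
  induction N with
  | zero =>
    intro M hM _ _ _
    have : M = 0 := Multiset.card_eq_zero.mp (Nat.le_zero.mp hM)
    subst this
    exact ⟨1, one_pos, by simp⟩
  | succ N ih =>
    intro M hcard hconj him hg0
    rcases Multiset.empty_or_exists_mem M with rfl | ⟨z, hz⟩
    · exact ⟨1, one_pos, by simp⟩
    have hzbar : (starRingEnd ℂ) z ∈ M := by
      rw [← hconj]; exact Multiset.mem_map_of_mem _ hz
    have hne : (starRingEnd ℂ) z ≠ z := by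
      intro h
      exact him z hz (Complex.conj_eq_iff_im.mp h)
    have hzbar' : (starRingEnd ℂ) z ∈ M.erase z := (Multiset.mem_erase_of_ne hne).mpr hzbar
    set M' := (M.erase z).erase ((starRingEnd ℂ) z) with hM'
    have hMeq : M = z ::ₘ (starRingEnd ℂ) z ::ₘ M' := by
      rw [hM', Multiset.cons_erase hzbar', Multiset.cons_erase hz]
    have hinj : Function.Injective (starRingEnd ℂ) := (starRingEnd ℂ).injective
    have hM'conj : M'.map (starRingEnd ℂ) = M' := by
      rw [hM', Multiset.map_erase _ hinj, Multiset.map_erase _ hinj, hconj,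
        Complex.conj_conj, Multiset.erase_comm]
    have hsub : ∀ z' ∈ M', z' ∈ M := fun z' hz' =>
      Multiset.mem_of_mem_erase (Multiset.mem_of_mem_erase hz')
    have hcard' : Multiset.card M' ≤ N := by
      rw [hM', Multiset.card_erase_of_mem hzbar', Multiset.card_erase_of_mem hz]
      have := hcard
      simp only [Nat.pred_eq_sub_one]
      omega
    obtain ⟨v, hv, hprod⟩ := ih M' hcard' hM'conj (fun z' h => him z' (hsub z' h))
      (fun z' h => hg0 z' (hsub z' h))
    refine ⟨Complex.normSq (g z) * v, mul_pos (Complex.normSq_pos.mpr (hg0 z hz)) hv, ?_⟩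
    rw [hMeq]
    simp only [Multiset.map_cons, Multiset.prod_cons]
    rw [hprod, hg z, ← mul_assoc, Complex.mul_conj]
    push_cast
    ring

lemma roots_conj_invariant (p : ℝ[X]) :
    ((p.map (algebraMap ℝ ℂ)).roots).map (starRingEnd ℂ) = (p.map (algebraMap ℝ ℂ)).roots := by
  have h1 : (p.map (algebraMap ℝ ℂ)).map (starRingEnd ℂ) = p.map (algebraMap ℝ ℂ) := by
    rw [Polynomial.map_map]
    congr 1
    ext x : 1
    simp [Complex.conj_ofReal]
  conv_rhs => rw [← h1]
  rw [Polynomial.Splits.roots_map (f := p.map (algebraMap ℝ ℂ)) (IsAlgClosed.splits _)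
    (starRingEnd ℂ)]

lemma eval_ofReal' (p : ℝ[X]) (x : ℝ) :
    (p.map (algebraMap ℝ ℂ)).eval (x : ℂ) = ((p.eval x : ℝ) : ℂ) := by
  rw [Polynomial.eval_map]
  show eval₂ (algebraMap ℝ ℂ) (algebraMap ℝ ℂ x) p = _
  rw [Polynomial.eval₂_at_apply]
  rfl

lemma eval_conj' (p : ℝ[X]) (z : ℂ) :
    (p.map (algebraMap ℝ ℂ)).eval ((starRingEnd ℂ) z)
      = (starRingEnd ℂ) ((p.map (algebraMap ℝ ℂ)).eval z) := by
  have := Polynomial.aeval_conj (K := ℂ) p z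
  simpa [Polynomial.aeval_def, Polynomial.eval_map] using this

lemma deriv_eval_zero_of_sq_dvd {K : Type*} [Field K] {p : K[X]} {a : K}
    (h : (X - C a)^2 ∣ p) : (derivative p).eval a = 0 := by
  obtain ⟨u, rfl⟩ := h
  rw [derivative_mul, derivative_pow]
  simp

lemma deriv_mul_neg (p : ℝ[X]) (x₁ x₂ : ℝ) (hne : x₁ ≠ x₂)
    (hset : {x : ℝ | p.eval x = 0} = {x₁, x₂})
    (h1 : (derivative p).eval x₁ ≠ 0) (h2 : (derivative p).eval x₂ ≠ 0) :
    (derivative p).eval x₁ * (derivative p).eval x₂ < 0 := by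
  have hx₁ : p.eval x₁ = 0 := by
    have h : x₁ ∈ ({x₁, x₂} : Set ℝ) := by simp
    rw [← hset] at h; exact h
  have hx₂ : p.eval x₂ = 0 := by
    have h : x₂ ∈ ({x₁, x₂} : Set ℝ) := by simp
    rw [← hset] at h; exact h
  obtain ⟨g, hg⟩ := dvd_iff_isRoot.mpr hx₁
  have hgx₂ : g.eval x₂ = 0 := by
    have h := hx₂
    rw [hg, eval_mul, eval_sub, eval_X, eval_C] at h
    rcases mul_eq_zero.mp h with h' | h'
    · exact absurd (by linarith [sub_eq_zero.mp h'] : x₁ = x₂) hne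
    · exact h'
  obtain ⟨q, hq⟩ := dvd_iff_isRoot.mpr hgx₂
  rw [hq] at hg
  have e1 : (derivative p).eval x₁ = (x₁ - x₂) * q.eval x₁ := by
    rw [hg, derivative_mul, derivative_mul]
    simp
  have e2 : (derivative p).eval x₂ = (x₂ - x₁) * q.eval x₂ := by
    rw [hg, derivative_mul, derivative_mul]
    simp
  have hh₁ : q.eval x₁ ≠ 0 := fun h0 => h1 (by rw [e1, h0, mul_zero])
  have hh₂ : q.eval x₂ ≠ 0 := fun h0 => h2 (by rw [e2, h0, mul_zero])
  have hnoroot : ∀ y : ℝ, q.eval y ≠ 0 := by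
    intro y hy
    have hpy : p.eval y = 0 := by rw [hg, eval_mul, eval_mul, hy, mul_zero, mul_zero]
    have : y ∈ ({x₁, x₂} : Set ℝ) := by rw [← hset]; exact hpy
    rcases this with rfl | rfl
    · exact hh₁ hy
    · exact hh₂ hy
  have hsign : 0 < q.eval x₁ * q.eval x₂ := by
    by_contra hle
    push_neg at hle
    have h0 : (0:ℝ) ∈ Set.uIcc (q.eval x₁) (q.eval x₂) := by
      rcases mul_nonpos_iff.mp hle with ⟨ha, hb⟩ | ⟨ha, hb⟩
      · exact Set.mem_uIcc.mpr (Or.inr ⟨hb, ha⟩)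
      · exact Set.mem_uIcc.mpr (Or.inl ⟨ha, hb⟩)
    obtain ⟨y, _, hy⟩ := intermediate_value_uIcc (q.continuous_aeval.continuousOn) h0
    exact hnoroot y (by simpa using hy)
  rw [e1, e2]
  have hsq : x₁ - x₂ ≠ 0 := sub_ne_zero.mpr hne
  have hsq2 : 0 < (x₁ - x₂)^2 := by positivity
  nlinarith [hsign, hsq2]



lemma aeval_eq_eval_map (p : ℝ[X]) (z : ℂ) :
    aeval z p = (p.map (algebraMap ℝ ℂ)).eval z := by
  rw [Polynomial.eval_map, Polynomial.aeval_def]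

lemma hsep_of (m : ℕ) (hm : 2 ≤ m) (k : ℝ) (hk : 0 < k)
    (hne : (3*(1/100)/(2*(m:ℝ)-3))^3 ≠ ((2*(m:ℝ)*(1/100)/(2*(m:ℝ)-3))^2/k)^m) :
    ∀ z : ℂ, ((Tp m k).map (algebraMap ℝ ℂ)).eval z = 0 →
      (derivative ((Tp m k).map (algebraMap ℝ ℂ))).eval z ≠ 0 := by
  intro z h1 h2
  apply no_common_root m hm k hk hne z
  · rw [aeval_eq_eval_map]; exact h1
  · rw [aeval_eq_eval_map, ← derivative_map]; exact h2

lemma im_ne_or_real_root (m : ℕ) (hm : 2 ≤ m) (k : ℝ) {z : ℂ}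
    (hz : z ∈ ((Tp m k).map (algebraMap ℝ ℂ)).roots) (him : z.im = 0) :
    (Tp m k).eval z.re = 0 ∧ z = (z.re : ℂ) := by
  have hzre : z = (z.re : ℂ) := by
    apply Complex.ext
    · simp
    · simp [him]
  have heval : ((Tp m k).map (algebraMap ℝ ℂ)).eval z = 0 :=
    (mem_roots ((monic_Tp m hm k).map (algebraMap ℝ ℂ)).ne_zero).mp hz
  rw [hzre, eval_ofReal'] at heval
  exact ⟨by exact_mod_cast heval, hzre⟩

lemma prod_pos_T0 (m : ℕ) (hm : 2 ≤ m) :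
    ∃ v : ℝ, 0 < v ∧
      ((((Tp m ((1/100)^2)).map (algebraMap ℝ ℂ)).roots).map
        (fun r => (derivative ((Tp m ((1/100)^2)).map (algebraMap ℝ ℂ))).eval r)).prod
        = (v : ℂ) := by
  set p := Tp m ((1/100)^2) with hp
  set q := p.map (algebraMap ℝ ℂ) with hq
  have hg : ∀ z : ℂ, (derivative q).eval ((starRingEnd ℂ) z)
      = (starRingEnd ℂ) ((derivative q).eval z) := by
    intro z
    rw [hq, derivative_map]
    exact eval_conj' (derivative p) z
  have him : ∀ z ∈ q.roots, z.im ≠ 0 := by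
    intro z hz h0
    obtain ⟨h1, _⟩ := im_ne_or_real_root m hm _ hz h0
    exact (T0_pos m hm z.re).ne' h1
  have hg0 : ∀ z ∈ q.roots, (derivative q).eval z ≠ 0 := by
    intro z hz
    apply hsep_of m hm _ (by norm_num) (key_ineq_T0 m hm).ne z
    exact (mem_roots ((monic_Tp m hm _).map (algebraMap ℝ ℂ)).ne_zero).mp hz
  exact conj_prod_aux _ hg (Multiset.card q.roots) q.roots le_rfl
    (roots_conj_invariant p) him hg0

lemma count_eq_one (m : ℕ) (hm : 2 ≤ m) (k : ℝ) (x : ℝ)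
    (hroot : (Tp m k).eval x = 0)
    (hd : (derivative ((Tp m k).map (algebraMap ℝ ℂ))).eval (x : ℂ) ≠ 0) :
    (((Tp m k).map (algebraMap ℝ ℂ)).roots).count (x : ℂ) = 1 := by
  set q := (Tp m k).map (algebraMap ℝ ℂ) with hq
  have hq0 : q ≠ 0 := ((monic_Tp m hm k).map (algebraMap ℝ ℂ)).ne_zero
  have hmem : (x : ℂ) ∈ q.roots := by
    rw [mem_roots hq0]
    rw [hq, IsRoot, eval_ofReal', hroot]
    norm_num
  refine le_antisymm ?_ (Multiset.one_le_count_iff_mem.mpr hmem)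
  by_contra h
  push_neg at h
  have h2 : 2 ≤ rootMultiplicity (x : ℂ) q := by
    rw [count_roots] at h; omega
  have hdvd : (X - C (x:ℂ))^2 ∣ q :=
    (pow_dvd_pow _ h2).trans (pow_rootMultiplicity_dvd q _)
  exact hd (deriv_eval_zero_of_sq_dvd hdvd)

lemma prod_neg_T (m : ℕ) (hm : 2 ≤ m) :
    ∃ v : ℝ, v < 0 ∧
      ((((Tp m ((9/10)^2)).map (algebraMap ℝ ℂ)).roots).map
        (fun r => (derivative ((Tp m ((9/10)^2)).map (algebraMap ℝ ℂ))).eval r)).prod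
        = (v : ℂ) := by
  obtain ⟨x₁, x₂, hne, hset⟩ := real_roots m hm
  set p := Tp m ((9/10)^2) with hp
  set q := p.map (algebraMap ℝ ℂ) with hq
  have hq0 : q ≠ 0 := ((monic_Tp m hm _).map (algebraMap ℝ ℂ)).ne_zero
  have hsep := hsep_of m hm _ (by norm_num) (key_ineq_T m hm).ne' 
  have hev₁ : p.eval x₁ = 0 := by
    have : x₁ ∈ ({x₁, x₂} : Set ℝ) := by simp
    rw [← hset] at this; exact this
  have hev₂ : p.eval x₂ = 0 := by
    have : x₂ ∈ ({x₁, x₂} : Set ℝ) := by simp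
    rw [← hset] at this; exact this
  have hqe₁ : q.eval (x₁ : ℂ) = 0 := by rw [hq, eval_ofReal', hev₁]; norm_num
  have hqe₂ : q.eval (x₂ : ℂ) = 0 := by rw [hq, eval_ofReal', hev₂]; norm_num
  have hd₁ : (derivative q).eval (x₁ : ℂ) ≠ 0 := hsep _ hqe₁
  have hd₂ : (derivative q).eval (x₂ : ℂ) ≠ 0 := hsep _ hqe₂
  have hcount₁ : q.roots.count (x₁ : ℂ) = 1 := count_eq_one m hm _ x₁ hev₁ hd₁
  have hcount₂ : q.roots.count (x₂ : ℂ) = 1 := count_eq_one m hm _ x₂ hev₂ hd₂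
  have hmem₁ : (x₁ : ℂ) ∈ q.roots := Multiset.one_le_count_iff_mem.mp (by omega)
  have hmem₂ : (x₂ : ℂ) ∈ q.roots := Multiset.one_le_count_iff_mem.mp (by omega)
  have hne' : (x₂ : ℂ) ≠ (x₁ : ℂ) := by exact_mod_cast hne.symm
  have hmem₂' : (x₂ : ℂ) ∈ q.roots.erase (x₁ : ℂ) :=
    (Multiset.mem_erase_of_ne hne').mpr hmem₂
  set M := (q.roots.erase (x₁ : ℂ)).erase (x₂ : ℂ) with hM
  have hMeq : q.roots = (x₁ : ℂ) ::ₘ (x₂ : ℂ) ::ₘ M := by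
    rw [hM, Multiset.cons_erase hmem₂', Multiset.cons_erase hmem₁]
  have hsub : ∀ z ∈ M, z ∈ q.roots := fun z hz =>
    Multiset.mem_of_mem_erase (Multiset.mem_of_mem_erase hz)
  -- nonreal elements
  have him : ∀ z ∈ M, z.im ≠ 0 := by
    intro z hz h0
    obtain ⟨h1, hzre⟩ := im_ne_or_real_root m hm _ (hsub z hz) h0
    have : z.re ∈ ({x₁, x₂} : Set ℝ) := by rw [← hset]; exact h1
    rcases this with h | h
    · rw [hzre, h] at hz
      have : q.roots.count (x₁ : ℂ) ≥ 2 := by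
        rw [hMeq, Multiset.count_cons_self, Multiset.count_cons_of_ne hne'.symm]
        have := Multiset.one_le_count_iff_mem.mpr hz
        omega
      omega
    · rw [hzre, h] at hz
      have : q.roots.count (x₂ : ℂ) ≥ 2 := by
        rw [hMeq, Multiset.count_cons_of_ne hne', Multiset.count_cons_self]
        have := Multiset.one_le_count_iff_mem.mpr hz
        omega
      omega
  -- conj invariance of M
  have hinj : Function.Injective (starRingEnd ℂ) := (starRingEnd ℂ).injective
  have hMconj : M.map (starRingEnd ℂ) = M := by
    rw [hM, Multiset.map_erase _ hinj, Multiset.map_erase _ hinj,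
      roots_conj_invariant p, Complex.conj_ofReal, Complex.conj_ofReal]
  have hgcomm : ∀ z : ℂ, (derivative q).eval ((starRingEnd ℂ) z)
      = (starRingEnd ℂ) ((derivative q).eval z) := by
    intro z
    rw [hq, derivative_map]
    exact eval_conj' (derivative p) z
  have hg0 : ∀ z ∈ M, (derivative q).eval z ≠ 0 := by
    intro z hz
    exact hsep _ ((mem_roots hq0).mp (hsub z hz))
  obtain ⟨v, hv, hprod⟩ := conj_prod_aux _ hgcomm (Multiset.card M) M le_rfl hMconj him hg0
  -- real derivative values
  have hdr₁ : (derivative p).eval x₁ ≠ 0 := by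
    intro h
    apply hd₁
    rw [hq, derivative_map, eval_ofReal', h]
    norm_num
  have hdr₂ : (derivative p).eval x₂ ≠ 0 := by
    intro h
    apply hd₂
    rw [hq, derivative_map, eval_ofReal', h]
    norm_num
  have hmul : (derivative p).eval x₁ * (derivative p).eval x₂ < 0 :=
    deriv_mul_neg p x₁ x₂ hne hset hdr₁ hdr₂
  refine ⟨(derivative p).eval x₁ * (derivative p).eval x₂ * v,
    mul_neg_of_neg_of_pos hmul hv, ?_⟩
  rw [hMeq]
  simp only [Multiset.map_cons, Multiset.prod_cons]
  rw [hprod]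
  have e₁ : (derivative q).eval (x₁ : ℂ) = (((derivative p).eval x₁ : ℝ) : ℂ) := by
    rw [hq, derivative_map, eval_ofReal']
  have e₂ : (derivative q).eval (x₂ : ℂ) = (((derivative p).eval x₂ : ℝ) : ℂ) := by
    rw [hq, derivative_map, eval_ofReal']
  rw [e₁, e₂]
  push_cast
  ring

theorem two_real_roots_and_disc_signs (d : ℕ) (hd : 4 ≤ d) (heven : Even d) :
    {x : ℝ | (((X : ℝ[X]) ^ (d / 2) + C (1 / 100)) ^ 2 - C ((9 / 10 : ℝ) ^ 2) * X ^ 3).eval x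
      = 0}.ncard = 2 ∧
    (∀ x : ℝ, (((X : ℝ[X]) ^ (d / 2) + C (1 / 100)) ^ 2 - C ((1 / 100 : ℝ) ^ 2) * X ^ 3).eval x
      ≠ 0) ∧
    ∃ a b : ℝ,
      (a : ℂ) = polyDisc ((((X : ℝ[X]) ^ (d / 2) + C (1 / 100)) ^ 2
        - C ((9 / 10 : ℝ) ^ 2) * X ^ 3).map (algebraMap ℝ ℂ)) ∧
      (b : ℂ) = polyDisc ((((X : ℝ[X]) ^ (d / 2) + C (1 / 100)) ^ 2
        - C ((1 / 100 : ℝ) ^ 2) * X ^ 3).map (algebraMap ℝ ℂ)) ∧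
      a * b < 0 := by
  set m := d / 2 with hmdef
  have hdm : d = 2 * m := by
    obtain ⟨j, hj⟩ := heven
    omega
  have hm : 2 ≤ m := by omega
  have hT : ((X : ℝ[X]) ^ (d / 2) + C (1 / 100)) ^ 2 - C ((9 / 10 : ℝ) ^ 2) * X ^ 3
      = Tp m ((9/10)^2) := rfl
  have hT0 : ((X : ℝ[X]) ^ (d / 2) + C (1 / 100)) ^ 2 - C ((1 / 100 : ℝ) ^ 2) * X ^ 3
      = Tp m ((1/100)^2) := rfl
  rw [hT, hT0]
  obtain ⟨x₁, x₂, hnex, hset⟩ := real_roots m hm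
  refine ⟨?_, ?_, ?_⟩
  · rw [hset, Set.ncard_pair hnex]
  · intro x
    exact (T0_pos m hm x).ne'
  · obtain ⟨vT, hvT, hprodT⟩ := prod_neg_T m hm
    obtain ⟨vT0, hvT0, hprodT0⟩ := prod_pos_T0 m hm
    set E := (2*m) * (2*m - 1) / 2 with hE
    refine ⟨(-1:ℝ)^E * vT, (-1:ℝ)^E * vT0, ?_, ?_, ?_⟩
    · unfold polyDisc
      have hdeg : ((Tp m ((9/10)^2)).map (algebraMap ℝ ℂ)).natDegree = 2*m := by
        rw [(monic_Tp m hm _).natDegree_map, natDegree_Tp m hm]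
      have hlc : ((Tp m ((9/10)^2)).map (algebraMap ℝ ℂ)).leadingCoeff = 1 :=
        (monic_Tp m hm _).map (algebraMap ℝ ℂ)
      rw [hdeg, hlc, one_pow, hprodT, ← hE]
      push_cast
      ring
    · unfold polyDisc
      have hdeg : ((Tp m ((1/100)^2)).map (algebraMap ℝ ℂ)).natDegree = 2*m := by
        rw [(monic_Tp m hm _).natDegree_map, natDegree_Tp m hm]
      have hlc : ((Tp m ((1/100)^2)).map (algebraMap ℝ ℂ)).leadingCoeff = 1 :=
        (monic_Tp m hm _).map (algebraMap ℝ ℂ)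
      rw [hdeg, hlc, one_pow, hprodT0, ← hE]
      push_cast
      ring
    · have hmulneg : vT * vT0 < 0 := mul_neg_of_neg_of_pos hvT hvT0
      rcases neg_one_pow_eq_or ℝ E with h | h
      · rw [h]; nlinarith
      · rw [h]; nlinarith
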